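/- arXiv:1408.4613 — 4 statements merged into one kernel-verified Lean document; each statement's English description precedes it below -/
import Mathlib

section
/- Assume 0 < μ_1 (the focusing case). Then g is strictly increasing on (−∞, μ_1), and there exists a unique β̄ ∈ (−∞, μ_1) with g(β̄) = 0. Moreover β̄ < 0, g(β) < 0 for all β < β̄, and g(β) > 0 for all β with β̄ < β < μ_1. -/
open Set Finset

/-- Focusing case: `g` is strictly increasing on `(-∞, μ₁)` and has a unique zero `β̄` there;
moreover `β̄ < 0`, `g < 0` left of `β̄` and `g > 0` on `(β̄, μ₁)`. -/
theorem focusing_g_unique_zero (n : ℕ) (hn : 2 ≤ n) (μ : Fin n → ℝ) (hμ : Monotone μ)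
    (g : ℝ → ℝ)
    (hg : ∀ β : ℝ, (∀ j, β ≠ μ j) → g β = 1 + β * ∑ j, 1 / (μ j - β))
    (hfoc : 0 < μ ⟨0, by omega⟩) :
    StrictMonoOn g (Iio (μ ⟨0, by omega⟩)) ∧
    ∃ βb : ℝ, βb < μ ⟨0, by omega⟩ ∧ g βb = 0 ∧
      (∀ β' : ℝ, β' < μ ⟨0, by omega⟩ → g β' = 0 → β' = βb) ∧
      βb < 0 ∧ (∀ β : ℝ, β < βb → g β < 0) ∧
      (∀ β : ℝ, βb < β → β < μ ⟨0, by omega⟩ → 0 < g β) := by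
  haveI : Nonempty (Fin n) := ⟨⟨0, by omega⟩⟩
  set μ0 : ℝ := μ ⟨0, by omega⟩ with hμ0
  have hle : ∀ j, μ0 ≤ μ j := fun j => hμ (by exact Fin.mk_le_of_le_val (Nat.zero_le _))
  have hpos : ∀ j, 0 < μ j := fun j => lt_of_lt_of_le hfoc (hle j)
  -- g agrees with the explicit formula on Iio μ0
  have key : ∀ β ∈ Iio μ0, g β = 1 + ∑ j, β / (μ j - β) := by
    intro β hβ
    rw [hg β (fun j => ne_of_lt (lt_of_lt_of_le hβ (hle j))), Finset.mul_sum]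
    congr 1
    exact Finset.sum_congr rfl fun j _ => (mul_one_div β _)
  have hsub : ∀ β ∈ Iio μ0, ∀ j : Fin n, 0 < μ j - β := by
    intro β hβ j
    have : β < μ j := lt_of_lt_of_le hβ (hle j)
    linarith
  -- strict monotonicity
  have mono : StrictMonoOn g (Iio μ0) := by
    intro a ha b hb hab
    rw [key a ha, key b hb]
    have : ∑ j, a / (μ j - a) < ∑ j, b / (μ j - b) := by
      apply Finset.sum_lt_sum_of_nonempty
      · exact Finset.univ_nonempty
      · intro j _
        rw [div_lt_div_iff₀ (hsub a ha j) (hsub b hb j)]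
        nlinarith [hpos j]
    linarith
  refine ⟨mono, ?_⟩
  -- values at 0 and at -2M
  set M : ℝ := ∑ j, μ j with hM
  have hMpos : 0 < M := Finset.sum_pos (fun j _ => hpos j) Finset.univ_nonempty
  have hμleM : ∀ j, μ j ≤ M := by
    intro j
    exact Finset.single_le_sum (fun i _ => (hpos i).le) (Finset.mem_univ j)
  have h0mem : (0 : ℝ) ∈ Iio μ0 := hfoc
  have hg0 : g 0 = 1 := by
    rw [key 0 h0mem]
    simp
  have hMmem : (-(2 * M)) ∈ Iio μ0 := by
    have : -(2 * M) < 0 := by linarith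
    exact lt_trans this hfoc
  have hgM : g (-(2 * M)) < 0 := by
    rw [key _ hMmem]
    have hterm : ∀ j : Fin n, -(2 * M) / (μ j - -(2 * M)) ≤ -(2 / 3 : ℝ) := by
      intro j
      have h1 : 0 < μ j + 2 * M := by nlinarith [hpos j]
      have h2 : μ j - -(2 * M) = μ j + 2 * M := by ring
      rw [h2, div_le_iff₀ h1]
      nlinarith [hμleM j, hpos j]
    have hsum : ∑ j, -(2 * M) / (μ j - -(2 * M)) ≤ ∑ _j : Fin n, -(2 / 3 : ℝ) :=
      Finset.sum_le_sum fun j _ => hterm j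
    have hcard : ∑ _j : Fin n, -(2 / 3 : ℝ) = n * (-(2 / 3)) := by
      simp [Finset.sum_const, Finset.card_univ]
      try ring
    have hn' : (2 : ℝ) ≤ n := by exact_mod_cast hn
    nlinarith
  -- continuity on [-(2M), 0]
  have hIcc : Icc (-(2 * M)) 0 ⊆ Iio μ0 := by
    intro x hx
    exact lt_of_le_of_lt hx.2 hfoc
  have hcont : ContinuousOn g (Icc (-(2 * M)) 0) := by
    have hcont' : ContinuousOn (fun β => 1 + ∑ j, β / (μ j - β)) (Icc (-(2 * M)) 0) := by
      apply ContinuousOn.add continuousOn_const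
      apply continuousOn_finset_sum
      intro j _
      apply ContinuousOn.div continuousOn_id
      · exact (continuousOn_const.sub continuousOn_id)
      · intro x hx
        have := hsub x (hIcc hx) j
        linarith
    exact hcont'.congr fun x hx => key x (hIcc hx)
  have hmem : (0 : ℝ) ∈ Ioo (g (-(2 * M))) (g 0) := ⟨hgM, by rw [hg0]; norm_num⟩
  obtain ⟨βb, hβbmem, hβbval⟩ := intermediate_value_Ioo (by linarith : -(2 * M) ≤ (0 : ℝ)) hcont hmem
  have hβb0 : βb < 0 := hβbmem.2
  have hβbIio : βb ∈ Iio μ0 := lt_trans hβb0 hfoc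
  refine ⟨βb, hβbIio, hβbval, ?_, hβb0, ?_, ?_⟩
  · intro β' hβ' hβ'0
    exact mono.injOn hβ' hβbIio (by rw [hβ'0, hβbval])
  · intro β hβ
    have : g β < g βb := mono (lt_trans hβ hβbIio) hβbIio hβ
    linarith [hβbval ▸ this]
  · intro β h1 h2
    have : g βb < g β := mono hβbIio h2 h1
    linarith [hβbval ▸ this]
end

section
/- Assume μ_n < 0 (the defocusing case). Then g is strictly decreasing on (μ_n, ∞), and there exists a unique β̄ ∈ (μ_n, ∞) with g(β̄) = 0. Moreover g(β) > 0 for all β with μ_n < β < β̄, and g(β) < 0 for all β > β̄. -/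
open Set Finset

/-- Defocusing case: `g` is strictly decreasing on `(μₙ, ∞)` and has a unique zero `β̄` there;
moreover `g > 0` on `(μₙ, β̄)` and `g < 0` right of `β̄`. -/
theorem defocusing_g_unique_zero (n : ℕ) (hn : 2 ≤ n) (μ : Fin n → ℝ) (hμ : Monotone μ)
    (g : ℝ → ℝ)
    (hg : ∀ β : ℝ, (∀ j, β ≠ μ j) → g β = 1 + β * ∑ j, 1 / (μ j - β))
    (hdef : μ ⟨n - 1, by omega⟩ < 0) :
    StrictAntiOn g (Ioi (μ ⟨n - 1, by omega⟩)) ∧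
    ∃ βb : ℝ, μ ⟨n - 1, by omega⟩ < βb ∧ g βb = 0 ∧
      (∀ β' : ℝ, μ ⟨n - 1, by omega⟩ < β' → g β' = 0 → β' = βb) ∧
      (∀ β : ℝ, μ ⟨n - 1, by omega⟩ < β → β < βb → 0 < g β) ∧
      (∀ β : ℝ, βb < β → g β < 0) := by
  haveI : NeZero n := ⟨by omega⟩
  set m : ℝ := μ ⟨n - 1, by omega⟩ with hm
  have hle : ∀ j : Fin n, μ j ≤ m := by
    intro j
    apply hμ
    show j ≤ (⟨n - 1, by omega⟩ : Fin n)
    rw [Fin.le_def]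
    have := j.isLt
    simp only []
    omega
  have hneg : ∀ j : Fin n, μ j < 0 := fun j => lt_of_le_of_lt (hle j) hdef
  set h : ℝ → ℝ := fun β => 1 + β * ∑ j, 1 / (μ j - β) with hh
  have keyg : ∀ β ∈ Ioi m, g β = h β := by
    intro β hβ
    exact hg β (fun j => ne_of_gt (lt_of_le_of_lt (hle j) hβ))
  have key2 : ∀ β ∈ Ioi m, h β = (1 - n) + ∑ j, μ j / (μ j - β) := by
    intro β hβ
    have hne : ∀ j : Fin n, μ j - β ≠ 0 := by
      intro j
      have : μ j < β := lt_of_le_of_lt (hle j) hβ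
      intro hc; linarith [sub_eq_zero.mp hc]
    have : ∀ j : Fin n, β * (1 / (μ j - β)) = μ j / (μ j - β) - 1 := by
      intro j
      rw [mul_one_div, div_sub_one (hne j)]
      congr 1
      ring
    calc h β = 1 + ∑ j, β * (1 / (μ j - β)) := by rw [hh]; simp [Finset.mul_sum]
    _ = 1 + ∑ j, (μ j / (μ j - β) - 1) := by rw [Finset.sum_congr rfl (fun j _ => this j)]
    _ = (1 - n) + ∑ j, μ j / (μ j - β) := by
        rw [Finset.sum_sub_distrib, Finset.sum_const]
        simp [Finset.card_univ]
        ring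
  have hanti : StrictAntiOn h (Ioi m) := by
    intro a ha b hb hab
    rw [key2 a ha, key2 b hb]
    have hsum : ∑ j, μ j / (μ j - b) < ∑ j, μ j / (μ j - a) := by
      apply Finset.sum_lt_sum_of_nonempty Finset.univ_nonempty
      intro j _
      have h1 : (0:ℝ) < -μ j := by linarith [hneg j]
      have h2 : (0:ℝ) < a - μ j := by linarith [lt_of_le_of_lt (hle j) ha]
      have h3 : a - μ j < b - μ j := by linarith
      have := div_lt_div_of_pos_left h1 h2 h3
      calc μ j / (μ j - b) = (-μ j) / (b - μ j) := by rw [← neg_div_neg_eq]; ring_nf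
      _ < (-μ j) / (a - μ j) := this
      _ = μ j / (μ j - a) := by rw [← neg_div_neg_eq]; ring_nf
    linarith
  -- explicit points
  set β0 : ℝ := m * (n - 1) / n with hβ0def
  set β1 : ℝ := -μ ⟨0, by omega⟩ + 1 with hβ1def
  have hnpos : (0:ℝ) < n := by positivity
  have hn1 : (1:ℝ) ≤ (n:ℝ) - 1 := by
    have : (2:ℝ) ≤ n := by exact_mod_cast hn
    linarith
  have hmneg : m < 0 := hdef
  have hβ0m : m < β0 := by
    rw [hβ0def]
    rw [lt_div_iff₀ hnpos]
    nlinarith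
  have hβ0neg : β0 < 0 := by
    rw [hβ0def]
    apply div_neg_of_neg_of_pos _ hnpos
    nlinarith
  have hβ1pos : (0:ℝ) < β1 := by
    have := hneg ⟨0, by omega⟩
    rw [hβ1def]; linarith
  have hβ01 : β0 < β1 := lt_trans hβ0neg hβ1pos
  have hβ1m : m < β1 := lt_trans hβ0m hβ01
  -- h β0 > 0
  have hpos0 : 0 < h β0 := by
    rw [key2 β0 hβ0m]
    have hterm : μ ⟨n-1, by omega⟩ / (μ ⟨n-1, by omega⟩ - β0) = n := by
      rw [← hm, hβ0def]
      have hm0 : m ≠ 0 := ne_of_lt hmneg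
      field_simp
      ring
    have hsum : (n:ℝ) ≤ ∑ j, μ j / (μ j - β0) := by
      rw [← hterm]
      apply Finset.single_le_sum (f := fun j => μ j / (μ j - β0)) _ (Finset.mem_univ _)
      intro j _
      have h1 : (0:ℝ) ≤ -μ j := by linarith [hneg j]
      have h2 : (0:ℝ) < β0 - μ j := by linarith [lt_of_le_of_lt (hle j) hβ0m]
      have : (0:ℝ) ≤ (-μ j) / (β0 - μ j) := div_nonneg h1 (le_of_lt h2)
      calc (0:ℝ) ≤ (-μ j) / (β0 - μ j) := this
      _ = μ j / (μ j - β0) := by rw [← neg_div_neg_eq]; ring_nf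
    linarith
  -- h β1 < 0
  have hneg1 : h β1 < 0 := by
    rw [key2 β1 hβ1m]
    have hsum : ∑ j, μ j / (μ j - β1) < ∑ _j : Fin n, ((n:ℝ) - 1) / n := by
      apply Finset.sum_lt_sum_of_nonempty Finset.univ_nonempty
      intro j _
      have hμ0 : μ ⟨0, by omega⟩ ≤ μ j := hμ (by rw [Fin.le_def]; simp)
      have h2 : (0:ℝ) < β1 - μ j := by linarith [lt_of_le_of_lt (hle j) hβ1m]
      have hkey : -μ j * n < ((n:ℝ) - 1) * (β1 - μ j) := by
        have h4 : -μ j < ((n:ℝ) - 1) * β1 := by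
          have : -μ j < β1 := by rw [hβ1def]; linarith
          nlinarith
        nlinarith [hneg j]
      calc μ j / (μ j - β1) = (-μ j) / (β1 - μ j) := by rw [← neg_div_neg_eq]; ring_nf
      _ < ((n:ℝ) - 1) / n := by
          rw [div_lt_div_iff₀ h2 hnpos]; nlinarith
    rw [Finset.sum_const, Finset.card_univ] at hsum
    simp only [Fintype.card_fin, nsmul_eq_mul] at hsum
    have : (n:ℝ) * (((n:ℝ) - 1) / n) = (n:ℝ) - 1 := by field_simp
    rw [this] at hsum
    linarith
  -- continuity on [β0, β1]
  have hcont : ContinuousOn h (Icc β0 β1) := by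
    apply ContinuousOn.add continuousOn_const
    apply ContinuousOn.mul continuousOn_id
    apply continuousOn_finset_sum
    intro j _
    apply ContinuousOn.div continuousOn_const
    · exact (continuousOn_const.sub continuousOn_id)
    · intro x hx
      have : μ j < x := lt_of_le_of_lt (hle j) (lt_of_lt_of_le hβ0m hx.1)
      intro hc; linarith [sub_eq_zero.mp hc]
  have hIVT := intermediate_value_Icc' (le_of_lt hβ01) hcont
  have h0mem : (0:ℝ) ∈ Icc (h β1) (h β0) := ⟨le_of_lt hneg1, le_of_lt hpos0⟩
  obtain ⟨βb, hβbmem, hβbzero⟩ := hIVT h0mem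
  have hβbm : m < βb := lt_of_lt_of_le hβ0m hβbmem.1
  have hgzero : g βb = 0 := by rw [keyg βb hβbm]; exact hβbzero
  have hganti : StrictAntiOn g (Ioi m) := by
    intro a ha b hb hab
    rw [keyg a ha, keyg b hb]
    exact hanti ha hb hab
  refine ⟨hganti, βb, hβbm, hgzero, ?_, ?_, ?_⟩
  · intro β' hβ' hgβ'
    exact hganti.injOn hβ' hβbm (by rw [hgβ', hgzero])
  · intro β hβm hβb
    have := hganti hβm hβbm hβb
    rw [hgzero] at this
    exact this
  · intro β hβ
    have := hganti hβbm (lt_trans hβbm hβ) hβ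
    rw [hgzero] at this
    exact this
end

section
/- Let β ∈ ℝ \ {μ_1, …, μ_n} satisfy (β − μ_j)·g(β) > 0 for every j = 1, …, n, and define α_j = ((β − μ_j)·g(β))^{−1/2}. Then α_j > 0 and μ_j·α_j² + β·∑_{k ≠ j} α_k² = −1 for every j = 1, …, n. -/
open Set Finset

/-- If `(β - μⱼ)·g(β) > 0` for all `j` and `αⱼ = ((β - μⱼ)·g(β))^{-1/2}`, then `αⱼ > 0` and
`μⱼ·αⱼ² + β·∑_{k ≠ j} αₖ² = -1` for every `j`. -/
theorem synchronized_coefficients_solve (n : ℕ) (hn : 2 ≤ n) (μ : Fin n → ℝ) (hμ : Monotone μ)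
    (g : ℝ → ℝ)
    (hg : ∀ β : ℝ, (∀ j, β ≠ μ j) → g β = 1 + β * ∑ j, 1 / (μ j - β))
    (β : ℝ) (hβ : ∀ j, β ≠ μ j)
    (hpos : ∀ j, 0 < (β - μ j) * g β)
    (α : Fin n → ℝ)
    (hα : ∀ j, α j = (Real.sqrt ((β - μ j) * g β))⁻¹) :
    ∀ j, 0 < α j ∧ μ j * (α j) ^ 2 + β * ∑ k ∈ Finset.univ.erase j, (α k) ^ 2 = -1 := by
  have hG0 : g β ≠ 0 := by
    intro h
    have := hpos ⟨0, by omega⟩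
    rw [h, mul_zero] at this
    exact lt_irrefl 0 this
  have hne : ∀ k, β - μ k ≠ 0 := fun k => sub_ne_zero.mpr (hβ k)
  have hαsq : ∀ k, (α k) ^ 2 = ((β - μ k) * g β)⁻¹ := by
    intro k
    rw [hα k, ← Real.sqrt_inv, Real.sq_sqrt (le_of_lt (inv_pos.mpr (hpos k)))]
  have hG : g β = 1 + β * ∑ k, 1 / (μ k - β) := hg β hβ
  have hS : β * ∑ k, (α k) ^ 2 = (1 - g β) * (g β)⁻¹ := by
    have : ∑ k, (α k) ^ 2 = (g β)⁻¹ * ∑ k, (β - μ k)⁻¹ := by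
      rw [Finset.mul_sum]
      refine Finset.sum_congr rfl fun k _ => ?_
      rw [hαsq k, mul_inv, mul_comm]
    rw [this]
    have h2 : β * ∑ k, (β - μ k)⁻¹ = 1 - g β := by
      have : ∑ k, (β - μ k)⁻¹ = -∑ k, 1 / (μ k - β) := by
        rw [← Finset.sum_neg_distrib]
        refine Finset.sum_congr rfl fun k _ => ?_
        rw [one_div, ← inv_neg, neg_sub]
      rw [this, hG]; ring
    calc β * ((g β)⁻¹ * ∑ k, (β - μ k)⁻¹) = (β * ∑ k, (β - μ k)⁻¹) * (g β)⁻¹ := by ring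
    _ = (1 - g β) * (g β)⁻¹ := by rw [h2]
  intro j
  constructor
  · rw [hα j]
    exact inv_pos.mpr (Real.sqrt_pos.mpr (hpos j))
  · rw [Finset.sum_erase_eq_sub (Finset.mem_univ j)]
    have : μ j * (α j) ^ 2 + β * (∑ k, (α k) ^ 2 - (α j) ^ 2)
        = (μ j - β) * (α j) ^ 2 + β * ∑ k, (α k) ^ 2 := by ring
    rw [this, hS, hαsq j, mul_inv, show μ j - β = -(β - μ j) by ring, neg_mul,
      ← mul_assoc, mul_inv_cancel₀ (hne j), one_mul]
    field_simp
    ring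
end

section
/- Let β ∈ ℝ \ {μ_1, …, μ_n} and suppose α_1, …, α_n are positive real numbers satisfying μ_j·α_j² + β·∑_{k ≠ j} α_k² = −1 for every j = 1, …, n. Then (β − μ_j)·g(β) > 0 and α_j = ((β − μ_j)·g(β))^{−1/2} for every j = 1, …, n; in particular the α_j are uniquely determined by β. -/
open Set Finset

/-- If positive numbers `αⱼ` satisfy `μⱼ·αⱼ² + β·∑_{k ≠ j} αₖ² = -1` for all `j`, then
`(β - μⱼ)·g(β) > 0` and `αⱼ = ((β - μⱼ)·g(β))^{-1/2}` for all `j`; in particular the `αⱼ`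
are uniquely determined by `β`. -/
theorem synchronized_coefficients_unique (n : ℕ) (hn : 2 ≤ n) (μ : Fin n → ℝ) (hμ : Monotone μ)
    (g : ℝ → ℝ)
    (hg : ∀ β : ℝ, (∀ j, β ≠ μ j) → g β = 1 + β * ∑ j, 1 / (μ j - β))
    (β : ℝ) (hβ : ∀ j, β ≠ μ j)
    (α : Fin n → ℝ) (hαpos : ∀ j, 0 < α j)
    (heq : ∀ j, μ j * (α j) ^ 2 + β * ∑ k ∈ Finset.univ.erase j, (α k) ^ 2 = -1) :
    ∀ j, 0 < (β - μ j) * g β ∧ α j = (Real.sqrt ((β - μ j) * g β))⁻¹ := by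
  intro j
  set S := ∑ k, α k ^ 2 with hS
  have h1 : ∀ i, α i ^ 2 * (β - μ i) = 1 + β * S := by
    intro i
    have h := heq i
    rw [Finset.sum_erase_eq_sub (Finset.mem_univ i)] at h
    nlinarith [h]
  have hne : 1 + β * S ≠ 0 := by
    intro h0
    have h := h1 j
    rw [h0] at h
    rcases mul_eq_zero.mp h with h | h
    · nlinarith [hαpos j]
    · exact hβ j (by linarith)
  have hsum : ∑ i, 1 / (μ i - β) = (∑ i, -(α i ^ 2)) / (1 + β * S) := by
    rw [Finset.sum_div]
    refine Finset.sum_congr rfl fun i _ => ?_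
    have h := h1 i
    have hμβ : μ i - β ≠ 0 := fun h0 => hβ i (by linarith)
    field_simp
    nlinarith [h]
  have hgβ : g β * (1 + β * S) = 1 := by
    rw [hg β hβ, hsum, Finset.sum_neg_distrib]
    field_simp
    rw [← hS]; ring
  have key : (β - μ j) * g β * α j ^ 2 = 1 := by
    calc (β - μ j) * g β * α j ^ 2 = (α j ^ 2 * (β - μ j)) * g β := by ring
    _ = (1 + β * S) * g β := by rw [h1 j]
    _ = 1 := by linarith [hgβ]
  have hαj : α j ≠ 0 := (hαpos j).ne'
  have hsq : (β - μ j) * g β = (α j ^ 2)⁻¹ := by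
    field_simp
    linarith [key]
  constructor
  · rw [hsq]
    positivity
  · rw [hsq, Real.sqrt_inv, Real.sqrt_sq (hαpos j).le, inv_inv]
end
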